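/- Suppose k satisfies the gradient bound (1.10). Then both mixed norms sup_{ζ∈ℝ³} ∫_{ℝ³} |∇_ζ k(ζ,ζ⁎)| dζ⁎ and sup_{ζ⁎∈ℝ³} ∫_{ℝ³} |∇_ζ k(ζ,ζ⁎)| dζ are finite, with a bound depending only on γ, δ and C₂. -/

import Mathlib

open MeasureTheory Real Set
open scoped ENNReal NNReal

noncomputable section

/-- Three-dimensional Euclidean space. -/
abbrev E3 : Type := EuclideanSpace ℝ (Fin 3)

/-- Backward exit time: `τ₋(x,ζ) = sup{t ≥ 0 : x - sζ ∈ Ω for all s ∈ [0,t)}`. -/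
def tauMinus (Ω : Set E3) (x ζ : E3) : ℝ :=
  sSup {t : ℝ | 0 ≤ t ∧ ∀ s ∈ Set.Ico (0 : ℝ) t, x - s • ζ ∈ Ω}

/-- Backward exit point: `p(x,ζ) = x - τ₋(x,ζ) ζ`. -/
def exitPoint (Ω : Set E3) (x ζ : E3) : E3 := x - tauMinus Ω x ζ • ζ

/-- The incoming boundary set `Γ₋`. -/
def GammaMinus (Ω : Set E3) : Set (E3 × E3) :=
  {z | z.1 ∈ frontier Ω ∧ ∃ t : ℝ, 0 < t ∧ z.1 + t • z.2 ∈ Ω}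

/-- Collision frequency `ν(ζ) = β₀ ∫ e^{-|η|²} |η-ζ|^γ dη`. -/
def nu (γ β₀ : ℝ) (ζ : E3) : ℝ :=
  β₀ * ∫ η : E3, Real.exp (-‖η‖ ^ 2) * ‖η - ζ‖ ^ γ

/-- The Grad-type pointwise bound (1.9) on the collision kernel `k`. -/
def KernelBound (γ δ C₁ : ℝ) (k : E3 → E3 → ℝ) : Prop :=
  ∀ ζ ζs : E3, ζ ≠ ζs →
    |k ζ ζs| ≤ C₁ * ‖ζ - ζs‖⁻¹ * (1 + ‖ζ‖ + ‖ζs‖) ^ (-(1 - γ)) *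
      Real.exp (-((1 - δ) / 4) *
        (‖ζ - ζs‖ ^ 2 + ((‖ζ‖ ^ 2 - ‖ζs‖ ^ 2) / ‖ζ - ζs‖) ^ 2))

/-- The gradient bound (1.10) on the collision kernel `k` (first-variable gradient),
together with differentiability of `k (·, ζ⁎)`. -/
def KernelGradBound (γ δ C₂ : ℝ) (k : E3 → E3 → ℝ) : Prop :=
  (∀ ζs : E3, Differentiable ℝ fun ζ => k ζ ζs) ∧
  ∀ ζ ζs : E3, ζ ≠ ζs →
    ‖fderiv ℝ (fun w => k w ζs) ζ‖ ≤
      C₂ * (1 + ‖ζ‖) * (‖ζ - ζs‖ ^ 2)⁻¹ * (1 + ‖ζ‖ + ‖ζs‖) ^ (-(1 - γ)) *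
        Real.exp (-((1 - δ) / 4) *
          (‖ζ - ζs‖ ^ 2 + ((‖ζ‖ ^ 2 - ‖ζs‖ ^ 2) / ‖ζ - ζs‖) ^ 2))

/-- The integral operator `K(f)(x,ζ) = ∫ k(ζ,ζ⁎) f(x,ζ⁎) dζ⁎`. -/
def Kop (k : E3 → E3 → ℝ) (f : E3 → E3 → ℝ) (x ζ : E3) : ℝ :=
  ∫ ζs : E3, k ζ ζs * f x ζs

/-- `f` is a mild solution of the stationary linearized Boltzmann equation:
it satisfies the exponential (Duhamel) integral form along backward characteristics,
a.e. on `Ω × ℝ³`. -/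
def MildSolution (Ω : Set E3) (γ β₀ : ℝ) (k f : E3 → E3 → ℝ) : Prop :=
  ∀ᵐ z : E3 × E3, z.1 ∈ Ω →
    f z.1 z.2 =
      f (exitPoint Ω z.1 z.2) z.2 * Real.exp (-(nu γ β₀ z.2) * tauMinus Ω z.1 z.2) +
      ∫ s in (0 : ℝ)..(tauMinus Ω z.1 z.2),
        Real.exp (-(nu γ β₀ z.2) * s) * Kop k f (z.1 - s • z.2) z.2

/-- The function `G` from the mixture lemma, written as an integral over space
and speed:
`G(x₀,ζ) = ∫₀^∞ ∫_Ω k(ζ, ρ(x₀−y)/|x₀−y|) e^{−ν(ρ)|x₀−y|/ρ} K(f)(y, ρ(x₀−y)/|x₀−y|) ρ|x₀−y|⁻² dy dρ`. -/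
def Gfun (Ω : Set E3) (γ β₀ : ℝ) (k f : E3 → E3 → ℝ) (x₀ ζ : E3) : ℝ :=
  ∫ ρ in Set.Ioi (0 : ℝ), ∫ y in Ω,
    k ζ ((ρ / ‖x₀ - y‖) • (x₀ - y)) *
      Real.exp (-(nu γ β₀ ((ρ / ‖x₀ - y‖) • (x₀ - y))) * (‖x₀ - y‖ / ρ)) *
      Kop k f y ((ρ / ‖x₀ - y‖) • (x₀ - y)) * (ρ / ‖x₀ - y‖ ^ 2)

/-- The term `III(x,ζ) = ∫₀^{τ₋(x,ζ)} e^{−ν(ζ)s} G(x−ζs, ζ) ds`. -/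
def IIIfun (Ω : Set E3) (γ β₀ : ℝ) (k f : E3 → E3 → ℝ) (x ζ : E3) : ℝ :=
  ∫ s in (0 : ℝ)..(tauMinus Ω x ζ),
    Real.exp (-(nu γ β₀ ζ) * s) * Gfun Ω γ β₀ k f (x - s • ζ) ζ

/-- The damped transport of boundary data: `I(x,ζ) = g(p(x,ζ),ζ) e^{−ν(ζ)τ₋(x,ζ)}`. -/
def Ifun (Ω : Set E3) (γ β₀ : ℝ) (g : E3 → E3 → ℝ) (x ζ : E3) : ℝ :=
  g (exitPoint Ω x ζ) ζ * Real.exp (-(nu γ β₀ ζ) * tauMinus Ω x ζ)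

/-- The twice-iterated boundary term
`II(x,ζ) = ∫₀^{τ₋(x,ζ)} ∫ e^{−ν(ζ)s} k(ζ,ζ′) e^{−ν(ζ′)τ₋(x−ζs,ζ′)} g(p(x−ζs,ζ′),ζ′) dζ′ ds`. -/
def IIfun (Ω : Set E3) (γ β₀ : ℝ) (k g : E3 → E3 → ℝ) (x ζ : E3) : ℝ :=
  ∫ s in (0 : ℝ)..(tauMinus Ω x ζ), ∫ ζ' : E3,
    Real.exp (-(nu γ β₀ ζ) * s) * k ζ ζ' *
      Real.exp (-(nu γ β₀ ζ') * tauMinus Ω (x - s • ζ) ζ') *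
      g (exitPoint Ω (x - s • ζ) ζ') ζ'

open scoped RealInnerProductSpace


/-- Base-antitonicity of rpow for nonpositive exponents. -/
lemma rpow_base_anti {x y p : ℝ} (hx : 0 < x) (hxy : x ≤ y) (hp : p ≤ 0) :
    y ^ p ≤ x ^ p := Real.rpow_le_rpow_of_nonpos hx hxy hp

/-- `∫ t in Ioc 0 ε, t ^ (-β) = ε ^ (1-β) / (1-β)` as a lintegral. -/
lemma lint_rpow_Ioc {β ε : ℝ} (hβ0 : 0 < β) (hβ1 : β < 1) (hε : 0 < ε) :
    ∫⁻ t in Set.Ioc (0:ℝ) ε, ENNReal.ofReal (t ^ (-β)) =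
      ENNReal.ofReal (ε ^ (1-β) / (1-β)) := by
  have hint : IntervalIntegrable (fun t : ℝ => t ^ (-β)) volume 0 ε :=
    intervalIntegral.intervalIntegrable_rpow' (by linarith)
  have hIoc : IntegrableOn (fun t : ℝ => t ^ (-β)) (Set.Ioc 0 ε) := by
    rwa [intervalIntegrable_iff_integrableOn_Ioc_of_le hε.le] at hint
  rw [← ofReal_integral_eq_lintegral_ofReal hIoc
      ((ae_restrict_iff' measurableSet_Ioc).2 (ae_of_all _ fun t ht =>
        Real.rpow_nonneg ht.1.le _))]
  congr 1
  rw [← intervalIntegral.integral_of_le hε.le,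
    integral_rpow (Or.inl (by linarith : (-1:ℝ) < -β)),
    Real.zero_rpow (by linarith : (-β + 1 : ℝ) ≠ 0)]
  rw [show (-β + 1 : ℝ) = 1 - β by ring]
  ring

/-- `∫ t in Ioi ε, exp (-(μ t)) = exp (-(μ ε)) / μ` as a lintegral. -/
lemma lint_exp_Ioi {m ε : ℝ} (hm : 0 < m) :
    ∫⁻ t in Set.Ioi ε, ENNReal.ofReal (Real.exp (-(m * t))) =
      ENNReal.ofReal (Real.exp (-(m * ε)) / m) := by
  have hInt : IntegrableOn (fun t : ℝ => Real.exp (-(m * t))) (Set.Ioi ε) := by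
    simpa [neg_mul] using exp_neg_integrableOn_Ioi ε hm
  rw [← ofReal_integral_eq_lintegral_ofReal hInt
      (ae_of_all _ fun t => (Real.exp_pos _).le)]
  congr 1
  have hderiv : ∀ x ∈ Set.Ici ε,
      HasDerivAt (fun t : ℝ => -Real.exp (-(m * t)) / m) (Real.exp (-(m * x))) x := by
    intro x _
    have h1 : HasDerivAt (fun t : ℝ => -(m * t)) (-m) x := by
      simpa using ((hasDerivAt_id x).const_mul m).fun_neg
    have h2 := (h1.exp.div_const m).fun_neg
    have e : (fun t : ℝ => -Real.exp (-(m * t)) / m) = fun i => -(Real.exp (-(m * i)) / m) := by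
      funext t; ring
    rw [e]
    exact h2.congr_deriv (by field_simp)
  have htend : Filter.Tendsto (fun t : ℝ => -Real.exp (-(m * t)) / m)
      Filter.atTop (nhds 0) := by
    have h1 : Filter.Tendsto (fun t : ℝ => -(m * t)) Filter.atTop Filter.atBot := by
      exact Filter.tendsto_neg_atTop_atBot.comp
        (Filter.Tendsto.const_mul_atTop hm Filter.tendsto_id)
    have h2 := Real.tendsto_exp_atBot.comp h1
    have h3 := (h2.neg).div_const m
    simpa using h3
  have := integral_Ioi_of_hasDerivAt_of_tendsto' hderiv hInt htend
  rw [this]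
  field_simp
  ring

/-- Reflection: the lintegral of an even function is twice that on `Ioi 0`. -/
lemma lintegral_abs_comp (f : ℝ → ℝ≥0∞) :
    ∫⁻ t : ℝ, f |t| = 2 * ∫⁻ t in Set.Ioi (0:ℝ), f t := by
  have h1 : ∫⁻ t : ℝ, f |t|
      = (∫⁻ t in Set.Iio (0:ℝ), f |t|) + ∫⁻ t in Set.Ici (0:ℝ), f |t| := by
    rw [← lintegral_add_compl (fun t => f |t|) measurableSet_Iio, compl_Iio]
  have h2 : ∫⁻ t in Set.Ici (0:ℝ), f |t| = ∫⁻ t in Set.Ioi (0:ℝ), f t := by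
    rw [← setLIntegral_congr (Ioi_ae_eq_Ici (a := (0:ℝ)))]
    exact setLIntegral_congr_fun measurableSet_Ioi
      (fun t (ht : 0 < t) => by rw [abs_of_pos ht])
  have h3 : ∫⁻ t in Set.Iio (0:ℝ), f |t| = ∫⁻ t in Set.Ioi (0:ℝ), f t := by
    have mp := Measure.measurePreserving_neg (volume : Measure ℝ)
    have emb : MeasurableEmbedding (Neg.neg : ℝ → ℝ) :=
      (Homeomorph.neg ℝ).measurableEmbedding
    have key := mp.setLIntegral_comp_preimage_emb emb (fun t => f |t|) (Set.Iio 0)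
    have hpre : (Neg.neg : ℝ → ℝ) ⁻¹' (Set.Iio 0) = Set.Ioi 0 := by
      ext x; simp [Set.mem_Iio, Set.mem_Ioi, neg_lt_zero]
    rw [hpre] at key
    rw [← key]
    exact setLIntegral_congr_fun measurableSet_Ioi
      (fun t (ht : 0 < t) => by rw [abs_neg, abs_of_pos ht])
  rw [h1, h2, h3, two_mul]

/-- One-dimensional model integrand. -/
def oneD (β lam a t : ℝ) : ℝ≥0∞ :=
  (ENNReal.ofReal |t|) ^ (-β) *
    ENNReal.ofReal (Real.exp (-(lam * t ^ 2)) * Real.exp (-(a * |t|)))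

lemma oneD_measurable (β lam a : ℝ) : Measurable (oneD β lam a) := by
  apply Measurable.mul
  · exact (ENNReal.continuous_rpow_const.measurable).comp
      (ENNReal.measurable_ofReal.comp (continuous_abs.measurable))
  · exact ENNReal.measurable_ofReal.comp (by fun_prop)

lemma oneD_eq_abs (β lam a : ℝ) (t : ℝ) :
    oneD β lam a t = oneD β lam a |t| := by
  unfold oneD
  rw [abs_abs, sq_abs]

lemma oneD_pos_eq {β lam a t : ℝ} (ht : 0 < t) :
    oneD β lam a t =
      ENNReal.ofReal (t ^ (-β) * (Real.exp (-(lam * t ^ 2)) * Real.exp (-(a * t)))) := by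
  unfold oneD
  rw [abs_of_pos ht, ENNReal.ofReal_rpow_of_pos ht,
    ENNReal.ofReal_mul (Real.rpow_nonneg ht.le _)]

lemma oneD_base {β lam a : ℝ} (hβ0 : 0 < β) (hβ1 : β < 1) (hlam : 0 < lam)
    (ha : 0 ≤ a) :
    ∫⁻ t : ℝ, oneD β lam a t ≤ ENNReal.ofReal (2 / (1-β) + 2 / lam) := by
  have heven : ∫⁻ t : ℝ, oneD β lam a t = 2 * ∫⁻ t in Set.Ioi (0:ℝ), oneD β lam a t := by
    rw [lintegral_congr (oneD_eq_abs β lam a)]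
    exact lintegral_abs_comp (oneD β lam a)
  rw [heven]
  have hsplit : ∫⁻ t in Set.Ioi (0:ℝ), oneD β lam a t
      ≤ (∫⁻ t in Set.Ioc (0:ℝ) 1, oneD β lam a t)
        + ∫⁻ t in Set.Ioi (1:ℝ), oneD β lam a t := by
    rw [← Set.Ioc_union_Ioi_eq_Ioi (zero_le_one (α := ℝ))]
    exact lintegral_union_le _ _ _
  have hb1 : ∫⁻ t in Set.Ioc (0:ℝ) 1, oneD β lam a t ≤ ENNReal.ofReal (1 / (1-β)) := by
    have hmono : ∀ t ∈ Set.Ioc (0:ℝ) 1, oneD β lam a t ≤ ENNReal.ofReal (t ^ (-β)) := by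
      intro t ht
      obtain ⟨ht0, ht1⟩ := ht
      rw [oneD_pos_eq ht0]
      apply ENNReal.ofReal_le_ofReal
      have h1 : Real.exp (-(lam * t ^ 2)) ≤ 1 :=
        Real.exp_le_one_iff.2 (neg_nonpos.2 (by positivity))
      have h2 : Real.exp (-(a * t)) ≤ 1 :=
        Real.exp_le_one_iff.2 (neg_nonpos.2 (mul_nonneg ha ht0.le))
      have h3 : (0:ℝ) ≤ t ^ (-β) := Real.rpow_nonneg ht0.le _
      calc t ^ (-β) * (Real.exp (-(lam * t ^ 2)) * Real.exp (-(a * t)))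
          ≤ t ^ (-β) * 1 := by
            apply mul_le_mul_of_nonneg_left _ h3
            exact mul_le_one₀ h1 (Real.exp_pos _).le h2
        _ = t ^ (-β) := mul_one _
    calc ∫⁻ t in Set.Ioc (0:ℝ) 1, oneD β lam a t
        ≤ ∫⁻ t in Set.Ioc (0:ℝ) 1, ENNReal.ofReal (t ^ (-β)) :=
          setLIntegral_mono (by fun_prop) hmono
      _ = ENNReal.ofReal ((1:ℝ) ^ (1-β) / (1-β)) := lint_rpow_Ioc hβ0 hβ1 one_pos
      _ = ENNReal.ofReal (1 / (1-β)) := by rw [Real.one_rpow]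
  have hb2 : ∫⁻ t in Set.Ioi (1:ℝ), oneD β lam a t ≤ ENNReal.ofReal (1 / lam) := by
    have hmono : ∀ t ∈ Set.Ioi (1:ℝ), oneD β lam a t
        ≤ ENNReal.ofReal (Real.exp (-(lam * t))) := by
      intro t ht
      have ht1 : (1:ℝ) ≤ t := le_of_lt ht
      have ht0 : 0 < t := lt_of_lt_of_le one_pos ht1
      rw [oneD_pos_eq ht0]
      apply ENNReal.ofReal_le_ofReal
      have h1 : t ^ (-β) ≤ 1 :=
        Real.rpow_le_one_of_one_le_of_nonpos ht1 (by linarith)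
      have htt : t ≤ t ^ 2 := by nlinarith
      have h2 : Real.exp (-(lam * t ^ 2)) ≤ Real.exp (-(lam * t)) := by
        apply Real.exp_le_exp.2
        have := mul_le_mul_of_nonneg_left htt hlam.le
        linarith
      have h3 : Real.exp (-(a * t)) ≤ 1 :=
        Real.exp_le_one_iff.2 (neg_nonpos.2 (mul_nonneg ha ht0.le))
      calc t ^ (-β) * (Real.exp (-(lam * t ^ 2)) * Real.exp (-(a * t)))
          ≤ 1 * (Real.exp (-(lam * t)) * 1) := by
            apply mul_le_mul h1 _ (by positivity) zero_le_one
            exact mul_le_mul h2 h3 (Real.exp_pos _).le (Real.exp_pos _).le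
        _ = Real.exp (-(lam * t)) := by ring
    calc ∫⁻ t in Set.Ioi (1:ℝ), oneD β lam a t
        ≤ ∫⁻ t in Set.Ioi (1:ℝ), ENNReal.ofReal (Real.exp (-(lam * t))) :=
          setLIntegral_mono (by fun_prop) hmono
      _ = ENNReal.ofReal (Real.exp (-(lam * 1)) / lam) := lint_exp_Ioi hlam
      _ ≤ ENNReal.ofReal (1 / lam) := by
          apply ENNReal.ofReal_le_ofReal
          gcongr
          exact Real.exp_le_one_iff.2 (by nlinarith [hlam.le])
  have hx : (0:ℝ) ≤ 1 / (1-β) := div_nonneg zero_le_one (by linarith)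
  have hy : (0:ℝ) ≤ 1 / lam := by positivity
  calc 2 * ∫⁻ t in Set.Ioi (0:ℝ), oneD β lam a t
      ≤ 2 * (ENNReal.ofReal (1 / (1-β)) + ENNReal.ofReal (1 / lam)) := by
        gcongr
        exact hsplit.trans (add_le_add hb1 hb2)
    _ = ENNReal.ofReal (2 / (1-β) + 2 / lam) := by
        rw [show ((2:ℝ≥0∞)) = ENNReal.ofReal (2:ℝ) by simp,
          ← ENNReal.ofReal_add hx hy, ← ENNReal.ofReal_mul (by norm_num : (0:ℝ) ≤ 2)]
        congr 1
        ring

lemma oneD_decay {β lam a : ℝ} (hβ0 : 0 < β) (hβ1 : β < 1) (hlam : 0 < lam)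
    (ha : 1 ≤ a) :
    ∫⁻ t : ℝ, oneD β lam a t ≤ ENNReal.ofReal ((2 / (1-β) + 2) * a ^ (β-1)) := by
  have ha0 : (0:ℝ) < a := lt_of_lt_of_le one_pos ha
  have hainv : (0:ℝ) < a⁻¹ := inv_pos.2 ha0
  have heven : ∫⁻ t : ℝ, oneD β lam a t = 2 * ∫⁻ t in Set.Ioi (0:ℝ), oneD β lam a t := by
    rw [lintegral_congr (oneD_eq_abs β lam a)]
    exact lintegral_abs_comp (oneD β lam a)
  rw [heven]
  have hsplit : ∫⁻ t in Set.Ioi (0:ℝ), oneD β lam a t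
      ≤ (∫⁻ t in Set.Ioc (0:ℝ) a⁻¹, oneD β lam a t)
        + ∫⁻ t in Set.Ioi a⁻¹, oneD β lam a t := by
    rw [← Set.Ioc_union_Ioi_eq_Ioi hainv.le]
    exact lintegral_union_le _ _ _
  have hval : (a⁻¹ : ℝ) ^ (1-β) = a ^ (β-1) := by
    rw [Real.inv_rpow ha0.le, ← Real.rpow_neg ha0.le]
    congr 1; ring
  have hb1 : ∫⁻ t in Set.Ioc (0:ℝ) a⁻¹, oneD β lam a t
      ≤ ENNReal.ofReal (a ^ (β-1) / (1-β)) := by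
    have hmono : ∀ t ∈ Set.Ioc (0:ℝ) a⁻¹, oneD β lam a t ≤ ENNReal.ofReal (t ^ (-β)) := by
      intro t ht
      obtain ⟨ht0, _⟩ := ht
      rw [oneD_pos_eq ht0]
      apply ENNReal.ofReal_le_ofReal
      have h1 : Real.exp (-(lam * t ^ 2)) ≤ 1 :=
        Real.exp_le_one_iff.2 (neg_nonpos.2 (by positivity))
      have h2 : Real.exp (-(a * t)) ≤ 1 :=
        Real.exp_le_one_iff.2 (neg_nonpos.2 (mul_nonneg ha0.le ht0.le))
      have h3 : (0:ℝ) ≤ t ^ (-β) := Real.rpow_nonneg ht0.le _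
      calc t ^ (-β) * (Real.exp (-(lam * t ^ 2)) * Real.exp (-(a * t)))
          ≤ t ^ (-β) * 1 := by
            apply mul_le_mul_of_nonneg_left _ h3
            exact mul_le_one₀ h1 (Real.exp_pos _).le h2
        _ = t ^ (-β) := mul_one _
    calc ∫⁻ t in Set.Ioc (0:ℝ) a⁻¹, oneD β lam a t
        ≤ ∫⁻ t in Set.Ioc (0:ℝ) a⁻¹, ENNReal.ofReal (t ^ (-β)) :=
          setLIntegral_mono (by fun_prop) hmono
      _ = ENNReal.ofReal ((a⁻¹) ^ (1-β) / (1-β)) := lint_rpow_Ioc hβ0 hβ1 hainv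
      _ = ENNReal.ofReal (a ^ (β-1) / (1-β)) := by rw [hval]
  have hb2 : ∫⁻ t in Set.Ioi a⁻¹, oneD β lam a t ≤ ENNReal.ofReal (a ^ (β-1)) := by
    have hmono : ∀ t ∈ Set.Ioi a⁻¹, oneD β lam a t
        ≤ ENNReal.ofReal (a ^ β * Real.exp (-(a * t))) := by
      intro t ht
      have ht0 : (0:ℝ) < t := lt_trans hainv ht
      rw [oneD_pos_eq ht0]
      apply ENNReal.ofReal_le_ofReal
      have h1 : t ^ (-β) ≤ a ^ β := by
        have := rpow_base_anti hainv (le_of_lt ht) (by linarith : -β ≤ 0)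
        rwa [Real.inv_rpow ha0.le, ← Real.rpow_neg ha0.le, neg_neg] at this
      have h2 : Real.exp (-(lam * t ^ 2)) ≤ 1 :=
        Real.exp_le_one_iff.2 (neg_nonpos.2 (by positivity))
      have h3 : (0:ℝ) ≤ t ^ (-β) := Real.rpow_nonneg ht0.le _
      calc t ^ (-β) * (Real.exp (-(lam * t ^ 2)) * Real.exp (-(a * t)))
          ≤ a ^ β * (1 * Real.exp (-(a * t))) := by
            apply mul_le_mul h1 _ (by positivity) (Real.rpow_nonneg ha0.le _)
            exact mul_le_mul_of_nonneg_right h2 (Real.exp_pos _).le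
        _ = a ^ β * Real.exp (-(a * t)) := by ring
    calc ∫⁻ t in Set.Ioi a⁻¹, oneD β lam a t
        ≤ ∫⁻ t in Set.Ioi a⁻¹, ENNReal.ofReal (a ^ β * Real.exp (-(a * t))) :=
          setLIntegral_mono (by fun_prop) hmono
      _ = ENNReal.ofReal (a ^ β) * ∫⁻ t in Set.Ioi a⁻¹, ENNReal.ofReal (Real.exp (-(a * t))) := by
          rw [← lintegral_const_mul' _ _ ENNReal.ofReal_ne_top]
          congr 1
          funext t
          rw [← ENNReal.ofReal_mul (Real.rpow_nonneg ha0.le _)]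
      _ = ENNReal.ofReal (a ^ β) * ENNReal.ofReal (Real.exp (-(a * a⁻¹)) / a) := by
          rw [lint_exp_Ioi ha0]
      _ ≤ ENNReal.ofReal (a ^ (β-1)) := by
          rw [← ENNReal.ofReal_mul (Real.rpow_nonneg ha0.le _)]
          apply ENNReal.ofReal_le_ofReal
          rw [mul_inv_cancel₀ (ne_of_gt ha0)]
          have hexp : Real.exp (-(1:ℝ)) ≤ 1 := Real.exp_le_one_iff.2 (by norm_num)
          have : a ^ (β-1) = a ^ β * a⁻¹ := by
            rw [show β - 1 = β + (-1) by ring, Real.rpow_add ha0, Real.rpow_neg_one]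
          rw [this]
          have h4 : Real.exp (-(1:ℝ)) / a ≤ a⁻¹ := by
            rw [div_eq_mul_inv]
            nlinarith [inv_pos.2 ha0]
          exact mul_le_mul_of_nonneg_left h4 (Real.rpow_nonneg ha0.le _)
  have hnn : (0:ℝ) ≤ a ^ (β-1) := Real.rpow_nonneg ha0.le _
  have hx : (0:ℝ) ≤ a ^ (β-1) / (1-β) := div_nonneg hnn (by linarith)
  calc 2 * ∫⁻ t in Set.Ioi (0:ℝ), oneD β lam a t
      ≤ 2 * (ENNReal.ofReal (a ^ (β-1) / (1-β)) + ENNReal.ofReal (a ^ (β-1))) := by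
        gcongr
        exact hsplit.trans (add_le_add hb1 hb2)
    _ = ENNReal.ofReal ((2 / (1-β) + 2) * a ^ (β-1)) := by
        rw [show ((2:ℝ≥0∞)) = ENNReal.ofReal (2:ℝ) by simp,
          ← ENNReal.ofReal_add hx hnn, ← ENNReal.ofReal_mul (by norm_num : (0:ℝ) ≤ 2)]
        congr 1
        ring

lemma oneD_bound {β lam a : ℝ} (hβ0 : 0 < β) (hβ1 : β < 1) (hlam : 0 < lam)
    (ha : 0 ≤ a) :
    ∫⁻ t : ℝ, oneD β lam a t
      ≤ ENNReal.ofReal ((4 / (1-β) + 4 / lam + 4) * (1+a) ^ (β-1)) := by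
  set D : ℝ := 4 / (1-β) + 4 / lam + 4 with hD
  have hDnn : 0 ≤ D := by
    have : (0:ℝ) ≤ 4 / (1-β) := div_nonneg (by norm_num) (by linarith)
    have : (0:ℝ) ≤ 4 / lam := by positivity
    unfold D
    have h1 : (0:ℝ) ≤ 4 / (1-β) := div_nonneg (by norm_num) (by linarith)
    have h2 : (0:ℝ) ≤ 4 / lam := by positivity
    linarith
  have h1a : (0:ℝ) < 1 + a := by linarith
  have hhalf : (1/2 : ℝ) ≤ (1+a) ^ (β-1) ∨ True := Or.inr trivial
  rcases le_total a 1 with hle | hge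
  · -- small a: use the base bound
    have hhalf : (1/2 : ℝ) ≤ (1+a) ^ (β-1) := by
      have h2 : (1+a:ℝ) ≤ 2 := by linarith
      have hb := rpow_base_anti h1a h2 (by linarith : β - 1 ≤ 0)
      have hc : ((2:ℝ)) ^ (-1 : ℝ) ≤ (2:ℝ) ^ (β-1) :=
        Real.rpow_le_rpow_of_exponent_le (by norm_num) (by linarith)
      have hd : ((2:ℝ)) ^ (-1 : ℝ) = 1/2 := by
        rw [Real.rpow_neg_one]; norm_num
      calc (1/2 : ℝ) = ((2:ℝ)) ^ (-1 : ℝ) := hd.symm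
        _ ≤ (2:ℝ) ^ (β-1) := hc
        _ ≤ (1+a) ^ (β-1) := hb
    refine (oneD_base hβ0 hβ1 hlam ha).trans (ENNReal.ofReal_le_ofReal ?_)
    have := mul_le_mul_of_nonneg_left hhalf hDnn
    have hsum : 2 / (1-β) + 2 / lam ≤ D * (1/2) := by
      unfold D
      have h1 : (0:ℝ) ≤ 1 / (1-β) := div_nonneg zero_le_one (by linarith)
      have h2 : (0:ℝ) ≤ 1 / lam := by positivity
      ring_nf
      nlinarith
    linarith
  · -- large a: use the decay bound
    have ha0 : (0:ℝ) < a := lt_of_lt_of_le one_pos hge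
    refine (oneD_decay hβ0 hβ1 hlam hge).trans (ENNReal.ofReal_le_ofReal ?_)
    have key : a ^ (β-1) ≤ 2 * (1+a) ^ (β-1) := by
      have h2a : (1+a:ℝ) ≤ 2*a := by linarith
      have hb := rpow_base_anti h1a h2a (by linarith : β - 1 ≤ 0)
      have hmul : ((2*a:ℝ)) ^ (β-1) = (2:ℝ)^(β-1) * a^(β-1) :=
        Real.mul_rpow (by norm_num) ha0.le
      have hc : (1/2 : ℝ) ≤ (2:ℝ) ^ (β-1) := by
        have : ((2:ℝ)) ^ (-1 : ℝ) ≤ (2:ℝ) ^ (β-1) :=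
          Real.rpow_le_rpow_of_exponent_le (by norm_num) (by linarith)
        rw [Real.rpow_neg_one] at this
        linarith
      have hnn : (0:ℝ) ≤ a ^ (β-1) := Real.rpow_nonneg ha0.le _
      nlinarith
    have h1 : (0:ℝ) ≤ 2 / (1-β) + 2 := by
      have : (0:ℝ) ≤ 2 / (1-β) := div_nonneg (by norm_num) (by linarith)
      linarith
    have h2 : (0:ℝ) ≤ (1+a) ^ (β-1) := Real.rpow_nonneg h1a.le _
    have h3 : (0:ℝ) ≤ 4 / lam := by positivity
    have e1 : (4:ℝ)/(1-β) + 4 = 2*(2/(1-β)+2) := by ring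
    nlinarith [mul_le_mul_of_nonneg_left key h1, mul_nonneg h3 h2]

abbrev E3' : Type := EuclideanSpace ℝ (Fin 3)

lemma norm_sq_eq3 (w : EuclideanSpace ℝ (Fin 3)) :
    ‖w‖^2 = (w 0)^2 + ((w 1)^2 + (w 2)^2) := by
  rw [EuclideanSpace.norm_eq, Real.sq_sqrt (by positivity)]
  simp [Fin.sum_univ_three, Real.norm_eq_abs, sq_abs]
  ring

lemma oneD_ne_zero {β : ℝ} (lam a t : ℝ) (hβ : 0 < β) : oneD β lam a t ≠ 0 := by
  unfold oneD
  apply mul_ne_zero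
  · intro h
    rcases ENNReal.rpow_eq_zero_iff.1 h with ⟨_, h2⟩ | ⟨h1, _⟩
    · linarith
    · exact (ENNReal.ofReal_ne_top) h1
  · exact (ENNReal.ofReal_pos.2 (by positivity)).ne'

lemma oneD_eq_top {β lam a t : ℝ} (ht : t = 0) (hβ : 0 < β) :
    oneD β lam a t = ⊤ := by
  unfold oneD
  rw [ht]
  simp only [abs_zero, ENNReal.ofReal_zero]
  rw [ENNReal.zero_rpow_of_neg (by linarith), ENNReal.top_mul
    (ENNReal.ofReal_pos.2 (by positivity)).ne']

lemma lintegral_fin3 (g₀ g₁ g₂ : ℝ → ℝ≥0∞) (h₀ : Measurable g₀)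
    (h₁ : Measurable g₁) (h₂ : Measurable g₂) :
    ∫⁻ x : Fin 3 → ℝ, g₀ (x 0) * (g₁ (x 1) * g₂ (x 2)) =
      (∫⁻ t : ℝ, g₀ t) * ((∫⁻ t : ℝ, g₁ t) * (∫⁻ t : ℝ, g₂ t)) := by
  have e1 := MeasureTheory.volume_preserving_piFinSuccAbove (fun _ : Fin 3 => ℝ) 0
  have e2 := MeasureTheory.volume_preserving_piFinSuccAbove (fun _ : Fin 2 => ℝ) 0
  have e3 := MeasureTheory.volume_preserving_funUnique (Fin 1) ℝ
  have hG1 : Measurable (fun p : ℝ × (Fin 2 → ℝ) => g₀ p.1 * (g₁ (p.2 0) * g₂ (p.2 1))) := by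
    apply ((h₀.comp measurable_fst).mul
      (((h₁.comp ((measurable_pi_apply 0).comp measurable_snd))).mul
        ((h₂.comp ((measurable_pi_apply 1).comp measurable_snd)))))
  have step1 : ∫⁻ x : Fin 3 → ℝ, g₀ (x 0) * (g₁ (x 1) * g₂ (x 2)) =
      ∫⁻ p : ℝ × (Fin 2 → ℝ), g₀ p.1 * (g₁ (p.2 0) * g₂ (p.2 1)) := by
    exact e1.lintegral_comp hG1
  have hG2 : Measurable (fun p : ℝ × (Fin 1 → ℝ) => g₁ p.1 * g₂ (p.2 0)) :=
    (h₁.comp measurable_fst).mul (h₂.comp ((measurable_pi_apply 0).comp measurable_snd))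
  have step2 : ∫⁻ y : Fin 2 → ℝ, g₁ (y 0) * g₂ (y 1) =
      ∫⁻ p : ℝ × (Fin 1 → ℝ), g₁ p.1 * g₂ (p.2 0) := by
    exact e2.lintegral_comp hG2
  have step3 : ∫⁻ z : Fin 1 → ℝ, g₂ (z 0) = ∫⁻ t : ℝ, g₂ t := by
    exact e3.lintegral_comp h₂
  have hmul1 : Measurable (fun y : Fin 2 → ℝ => g₁ (y 0) * g₂ (y 1)) :=
    (h₁.comp (measurable_pi_apply 0)).mul (h₂.comp (measurable_pi_apply 1))
  have hmul2 : Measurable (fun z : Fin 1 → ℝ => g₂ (z 0)) :=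
    h₂.comp (measurable_pi_apply 0)
  rw [step1, MeasureTheory.Measure.volume_eq_prod]
  rw [lintegral_prod_mul (f := g₀) (g := fun y : Fin 2 → ℝ => g₁ (y 0) * g₂ (y 1))
    h₀.aemeasurable hmul1.aemeasurable]
  rw [step2, MeasureTheory.Measure.volume_eq_prod]
  rw [lintegral_prod_mul (f := g₁) (g := fun z : Fin 1 → ℝ => g₂ (z 0))
    h₁.aemeasurable hmul2.aemeasurable]
  rw [step3]

lemma exists_basis (v : E3') : ∃ b : OrthonormalBasis (Fin 3) ℝ E3',
    ∀ u : E3', ⟪v, u⟫ = ‖v‖ * b.repr u 0 := by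
  by_cases hv : v = 0
  · refine ⟨EuclideanSpace.basisFun (Fin 3) ℝ, fun u => ?_⟩
    simp [hv]
  · set e : E3' := ‖v‖⁻¹ • v with he
    have hne : ‖e‖ = 1 := norm_smul_inv_norm hv
    have horth : Orthonormal ℝ (Set.restrict {(0 : Fin 3)} (fun _ : Fin 3 => e)) := by
      constructor
      · intro i; exact hne
      · intro i j hij
        exact absurd (Subtype.ext ((Set.mem_singleton_iff.1 i.2).trans
          (Set.mem_singleton_iff.1 j.2).symm)) hij
    obtain ⟨b, hb⟩ := horth.exists_orthonormalBasis_extension_of_card_eq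
      (by simp [finrank_euclideanSpace_fin])
    refine ⟨b, fun u => ?_⟩
    rw [b.repr_apply_apply, hb 0 rfl]
    have hv' : (0:ℝ) < ‖v‖ := norm_pos_iff.2 hv
    rw [he, real_inner_smul_left]
    field_simp
lemma pointwise_prod {γ θ β' c₀ c₂a a : ℝ} (hθ0 : 0 < θ) (hβ'0 : 0 < β')
    (hθ2 : θ/2 + β' = 1) (ha : 0 ≤ a) (hγ : 0 ≤ γ) (t y z : ℝ) :
    ENNReal.ofReal ((1+a)^γ * ((t^2 + (y^2 + z^2))⁻¹ *
      (Real.exp (-(c₀ * (t^2 + (y^2+z^2)))) * Real.exp (-(c₂a * |t|)))))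
      ≤ ENNReal.ofReal ((1+a)^γ) *
        (oneD θ c₀ c₂a t * (oneD β' c₀ 0 y * oneD β' c₀ 0 z)) := by
  rw [ENNReal.ofReal_mul (by positivity)]
  apply mul_le_mul_right
  by_cases ht : t = 0
  · rw [oneD_eq_top ht hθ0, ENNReal.top_mul
      (mul_ne_zero (oneD_ne_zero _ _ _ hβ'0) (oneD_ne_zero _ _ _ hβ'0))]
    exact le_top
  by_cases hy : y = 0
  · rw [oneD_eq_top hy hβ'0, ENNReal.top_mul (oneD_ne_zero _ _ _ hβ'0),
      ENNReal.mul_top (oneD_ne_zero _ _ _ hθ0)]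
    exact le_top
  by_cases hz : z = 0
  · rw [oneD_eq_top hz hβ'0, ENNReal.mul_top (oneD_ne_zero _ _ _ hβ'0),
      ENNReal.mul_top (oneD_ne_zero _ _ _ hθ0)]
    exact le_top
  · have ht0 : 0 < |t| := abs_pos.2 ht
    have hy0 : 0 < |y| := abs_pos.2 hy
    have hz0 : 0 < |z| := abs_pos.2 hz
    have hS : (0:ℝ) < t^2 + (y^2 + z^2) := by positivity
    have e1 : oneD θ c₀ c₂a t =
        ENNReal.ofReal (|t|^(-θ) * (Real.exp (-(c₀ * t^2)) * Real.exp (-(c₂a * |t|)))) := by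
      unfold oneD
      rw [ENNReal.ofReal_rpow_of_pos ht0, ← ENNReal.ofReal_mul (Real.rpow_nonneg ht0.le _)]
    have e2 : oneD β' c₀ 0 y =
        ENNReal.ofReal (|y|^(-β') * Real.exp (-(c₀ * y^2))) := by
      unfold oneD
      rw [ENNReal.ofReal_rpow_of_pos hy0, ← ENNReal.ofReal_mul (Real.rpow_nonneg hy0.le _)]
      norm_num
    have e3 : oneD β' c₀ 0 z =
        ENNReal.ofReal (|z|^(-β') * Real.exp (-(c₀ * z^2))) := by
      unfold oneD
      rw [ENNReal.ofReal_rpow_of_pos hz0, ← ENNReal.ofReal_mul (Real.rpow_nonneg hz0.le _)]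
      norm_num
    rw [e1, e2, e3, ← ENNReal.ofReal_mul (by positivity), ← ENNReal.ofReal_mul (by positivity)]
    apply ENNReal.ofReal_le_ofReal
    have hsplit : Real.exp (-(c₀ * (t^2 + (y^2+z^2))))
        = Real.exp (-(c₀ * t^2)) * (Real.exp (-(c₀ * y^2)) * Real.exp (-(c₀ * z^2))) := by
      rw [← Real.exp_add, ← Real.exp_add]
      congr 1
      ring
    have hP : (t^2 + (y^2 + z^2))⁻¹ ≤ |t|^(-θ) * (|y|^(-β') * |z|^(-β')) := by
      have hQpos : (0:ℝ) < |t|^θ * (|y|^β' * |z|^β') := by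
        have := Real.rpow_pos_of_pos ht0 θ
        have := Real.rpow_pos_of_pos hy0 β'
        have := Real.rpow_pos_of_pos hz0 β'
        positivity
      have h1 : |t|^θ ≤ (t^2 + (y^2 + z^2))^(θ/2) := by
        have ha1 : |t|^θ = (t^2)^(θ/2) := by
          rw [← sq_abs, ← Real.rpow_natCast |t| 2, ← Real.rpow_mul (abs_nonneg t)]
          congr 1
          ring
        rw [ha1]
        exact Real.rpow_le_rpow (by positivity) (by nlinarith [sq_nonneg y, sq_nonneg z])
          (by linarith)
      have h2 : |y|^β' * |z|^β' ≤ (t^2 + (y^2 + z^2))^β' := by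
        rw [← Real.mul_rpow (abs_nonneg y) (abs_nonneg z)]
        apply Real.rpow_le_rpow (by positivity) _ (by linarith)
        nlinarith [sq_nonneg (|y| - |z|), sq_abs y, sq_abs z, sq_nonneg t]
      have hQS : |t|^θ * (|y|^β' * |z|^β') ≤ t^2 + (y^2 + z^2) := by
        calc |t|^θ * (|y|^β' * |z|^β')
            ≤ (t^2 + (y^2 + z^2))^(θ/2) * (t^2 + (y^2 + z^2))^β' := by
              apply mul_le_mul h1 h2 (by positivity) (by positivity)
          _ = (t^2 + (y^2 + z^2))^(θ/2 + β') := (Real.rpow_add hS _ _).symm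
          _ = t^2 + (y^2 + z^2) := by rw [hθ2, Real.rpow_one]
      have hinv := inv_anti₀ hQpos hQS
      calc (t^2 + (y^2 + z^2))⁻¹ ≤ (|t|^θ * (|y|^β' * |z|^β'))⁻¹ := hinv
        _ = |t|^(-θ) * (|y|^(-β') * |z|^(-β')) := by
            rw [mul_inv, mul_inv, ← Real.rpow_neg (abs_nonneg t),
              ← Real.rpow_neg (abs_nonneg y), ← Real.rpow_neg (abs_nonneg z)]
    have hB : (0:ℝ) ≤ Real.exp (-(c₀ * t^2)) * (Real.exp (-(c₀ * y^2)) *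
        Real.exp (-(c₀ * z^2))) * Real.exp (-(c₂a * |t|)) := by positivity
    calc (t^2 + (y^2 + z^2))⁻¹ *
          (Real.exp (-(c₀ * (t^2 + (y^2+z^2)))) * Real.exp (-(c₂a * |t|)))
        = (t^2 + (y^2 + z^2))⁻¹ * (Real.exp (-(c₀ * t^2)) * (Real.exp (-(c₀ * y^2)) *
            Real.exp (-(c₀ * z^2))) * Real.exp (-(c₂a * |t|))) := by rw [hsplit]
      _ ≤ (|t|^(-θ) * (|y|^(-β') * |z|^(-β'))) * (Real.exp (-(c₀ * t^2)) *
            (Real.exp (-(c₀ * y^2)) * Real.exp (-(c₀ * z^2))) * Real.exp (-(c₂a * |t|))) :=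
          mul_le_mul_of_nonneg_right hP hB
      _ = |t| ^ (-θ) * (Real.exp (-(c₀ * t ^ 2)) * Real.exp (-(c₂a * |t|))) *
          (|y| ^ (-β') * Real.exp (-(c₀ * y ^ 2)) *
            (|z| ^ (-β') * Real.exp (-(c₀ * z ^ 2)))) := by ring

lemma key_lemma {γ c₀ c₂ : ℝ} (hγ0 : 0 ≤ γ) (hγ1 : γ < 1) (hc₀ : 0 < c₀) (hc₂ : 0 < c₂) :
    ∃ C : ℝ, 0 < C ∧ ∀ v : E3',
      (∫⁻ u : E3', ENNReal.ofReal ((1 + ‖v‖) ^ γ * ((‖u‖^2)⁻¹ *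
        (Real.exp (-(c₀ * ‖u‖^2)) * Real.exp (-(c₂ * |⟪v, u⟫|))))))
        ≤ ENNReal.ofReal C := by
  set θ : ℝ := (1-γ)/2 with hθdef
  have hθ0 : 0 < θ := by rw [hθdef]; linarith
  have hθ1 : θ < 1 := by rw [hθdef]; linarith
  set β' : ℝ := 1 - θ/2 with hβ'def
  have hβ'0 : 0 < β' := by rw [hβ'def]; linarith
  have hβ'1 : β' < 1 := by rw [hβ'def]; linarith
  have hθ2 : θ/2 + β' = 1 := by rw [hβ'def]; ring
  set Dt : ℝ := 4/(1-θ) + 4/c₀ + 4 with hDtdef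
  set M : ℝ := 2/(1-β') + 2/c₀ with hMdef
  set m : ℝ := min 1 c₂ with hmdef
  have hm0 : 0 < m := lt_min one_pos hc₂
  have hDt : 0 < Dt := by
    have h1 : 0 < 4/(1-θ) := by apply div_pos <;> linarith
    have h2 : 0 < 4/c₀ := by positivity
    rw [hDtdef]; linarith
  have hM : 0 < M := by
    have h1 : 0 < 2/(1-β') := by apply div_pos <;> linarith
    have h2 : 0 < 2/c₀ := by positivity
    rw [hMdef]; linarith
  have hmr : 0 < m ^ (θ-1) := Real.rpow_pos_of_pos hm0 _
  refine ⟨Dt * m^(θ-1) * (M*M), by positivity, fun v => ?_⟩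
  obtain ⟨b, hb⟩ := exists_basis v
  set a : ℝ := ‖v‖ with hadef
  have ha : 0 ≤ a := norm_nonneg v
  set F' : (Fin 3 → ℝ) → ℝ≥0∞ := fun x =>
    ENNReal.ofReal ((1+a)^γ * (((x 0)^2 + ((x 1)^2 + (x 2)^2))⁻¹ *
      (Real.exp (-(c₀ * ((x 0)^2 + ((x 1)^2 + (x 2)^2)))) *
        Real.exp (-(c₂ * a * |x 0|))))) with hF'def
  have hF' : Measurable F' := by
    apply ENNReal.measurable_ofReal.comp
    fun_prop
  have mp : MeasurePreserving
      (fun u : E3' => (MeasurableEquiv.toLp 2 (Fin 3 → ℝ)).symm (b.repr u)) volume volume :=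
    (EuclideanSpace.volume_preserving_symm_measurableEquiv_toLp (Fin 3)).comp b.measurePreserving_repr
  have transport : (∫⁻ u : E3', ENNReal.ofReal ((1 + ‖v‖) ^ γ * ((‖u‖^2)⁻¹ *
        (Real.exp (-(c₀ * ‖u‖^2)) * Real.exp (-(c₂ * |⟪v, u⟫|))))))
      = ∫⁻ x : Fin 3 → ℝ, F' x := by
    rw [← mp.lintegral_comp hF']
    apply lintegral_congr
    intro u
    have h1 : ‖b.repr u‖ = ‖u‖ := b.repr.norm_map u
    have h2 := norm_sq_eq3 (b.repr u)
    rw [h1] at h2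
    have h3 : (MeasurableEquiv.toLp 2 (Fin 3 → ℝ)).symm (b.repr u) = fun i => b.repr u i := rfl
    rw [hF'def]
    simp only [h3]
    congr 1
    rw [← h2, hb u, abs_mul, abs_of_nonneg ha, ← hadef]
    ring_nf
  rw [transport]
  have hptwise : ∀ x : Fin 3 → ℝ, F' x ≤
      ENNReal.ofReal ((1+a)^γ) *
        (oneD θ c₀ (c₂*a) (x 0) * (oneD β' c₀ 0 (x 1) * oneD β' c₀ 0 (x 2))) := by
    intro x
    exact pointwise_prod hθ0 hβ'0 hθ2 ha hγ0 (x 0) (x 1) (x 2)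
  calc ∫⁻ x : Fin 3 → ℝ, F' x
      ≤ ∫⁻ x : Fin 3 → ℝ, ENNReal.ofReal ((1+a)^γ) *
          (oneD θ c₀ (c₂*a) (x 0) * (oneD β' c₀ 0 (x 1) * oneD β' c₀ 0 (x 2))) :=
        lintegral_mono hptwise
    _ = ENNReal.ofReal ((1+a)^γ) * ∫⁻ x : Fin 3 → ℝ,
          oneD θ c₀ (c₂*a) (x 0) * (oneD β' c₀ 0 (x 1) * oneD β' c₀ 0 (x 2)) :=
        lintegral_const_mul' _ _ ENNReal.ofReal_ne_top
    _ = ENNReal.ofReal ((1+a)^γ) * ((∫⁻ t, oneD θ c₀ (c₂*a) t) *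
          ((∫⁻ t, oneD β' c₀ 0 t) * (∫⁻ t, oneD β' c₀ 0 t))) := by
        rw [lintegral_fin3 _ _ _ (oneD_measurable _ _ _) (oneD_measurable _ _ _)
          (oneD_measurable _ _ _)]
    _ ≤ ENNReal.ofReal ((1+a)^γ) * (ENNReal.ofReal (Dt * (1+c₂*a)^(θ-1)) *
          (ENNReal.ofReal M * ENNReal.ofReal M)) := by
        gcongr
        · exact oneD_bound hθ0 hθ1 hc₀ (by positivity)
        · exact oneD_base hβ'0 hβ'1 hc₀ le_rfl
        · exact oneD_base hβ'0 hβ'1 hc₀ le_rfl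
    _ = ENNReal.ofReal ((1+a)^γ * (Dt * (1+c₂*a)^(θ-1) * (M*M))) := by
        rw [← ENNReal.ofReal_mul hM.le, ← ENNReal.ofReal_mul (by positivity),
          ← ENNReal.ofReal_mul (by positivity)]
    _ ≤ ENNReal.ofReal (Dt * m^(θ-1) * (M*M)) := by
        apply ENNReal.ofReal_le_ofReal
        have hkey : (1+c₂*a) ^ (θ-1) ≤ m^(θ-1) * (1+a)^(θ-1) := by
          have hma : m * (1+a) ≤ 1 + c₂*a := by
            rcases le_total c₂ 1 with h | h
            · rw [hmdef, min_eq_right h]; nlinarith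
            · rw [hmdef, min_eq_left h]; nlinarith
          have h1 : (0:ℝ) < m * (1+a) := by positivity
          have h2 := rpow_base_anti h1 hma (by linarith : θ - 1 ≤ 0)
          rwa [Real.mul_rpow hm0.le (by positivity)] at h2
        have hone : (1+a)^γ * (1+a)^(θ-1) ≤ 1 := by
          rw [← Real.rpow_add (by linarith)]
          apply Real.rpow_le_one_of_one_le_of_nonpos (by linarith)
          rw [hθdef]; linarith
        have e1 : (1+a)^γ * (Dt * (1+c₂*a)^(θ-1) * (M*M))
            ≤ (1+a)^γ * (Dt * (m^(θ-1) * (1+a)^(θ-1)) * (M*M)) := by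
          have hnn : (0:ℝ) ≤ (1+a)^γ := by positivity
          apply mul_le_mul_of_nonneg_left _ hnn
          apply mul_le_mul_of_nonneg_right _ (by positivity)
          exact mul_le_mul_of_nonneg_left hkey hDt.le
        have e2 : (1+a)^γ * (Dt * (m^(θ-1) * (1+a)^(θ-1)) * (M*M))
            = ((1+a)^γ * (1+a)^(θ-1)) * (Dt * m^(θ-1) * (M*M)) := by ring
        have e3 : ((1+a)^γ * (1+a)^(θ-1)) * (Dt * m^(θ-1) * (M*M))
            ≤ 1 * (Dt * m^(θ-1) * (M*M)) := by
          apply mul_le_mul_of_nonneg_right hone (by positivity)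
        linarith [e1, e2.le, e3]

lemma exponent_est {ζ ζs v : E3'} (hne : ζ ≠ ζs) (hv : v = ζ ∨ v = ζs) {c : ℝ} (hc : 0 < c) :
    Real.exp (-c * (‖ζ - ζs‖ ^ 2 + ((‖ζ‖ ^ 2 - ‖ζs‖ ^ 2) / ‖ζ - ζs‖) ^ 2))
      ≤ Real.exp (-(c/4 * ‖ζ - ζs‖^2)) * Real.exp (-(c/2 * |⟪v, ζ - ζs⟫|)) := by
  have hq0 : (0:ℝ) < ‖ζ - ζs‖ := norm_pos_iff.2 (sub_ne_zero.2 hne)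
  set q : ℝ := ‖ζ - ζs‖^2 with hqdef
  have hq : 0 < q := by positivity
  set X : ℝ := ‖ζ‖^2 - ‖ζs‖^2 with hXdef
  have hE : ((‖ζ‖ ^ 2 - ‖ζs‖ ^ 2) / ‖ζ - ζs‖) ^ 2 = X^2 / q := by
    rw [div_pow, ← hXdef, hqdef]
  rw [hE, ← Real.exp_add]
  apply Real.exp_le_exp.2
  -- identity: 2⟪ζ, ζ-ζs⟫ = X + q,  2⟪ζs, ζ-ζs⟫ = X - q
  have hid : ‖ζ - ζs‖^2 = ‖ζ‖^2 - 2*⟪ζ,ζs⟫ + ‖ζs‖^2 := norm_sub_sq_real ζ ζs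
  have hinner : 2*⟪v, ζ - ζs⟫ = X + q ∨ 2*⟪v, ζ - ζs⟫ = X - q := by
    rcases hv with rfl | rfl
    · left
      rw [inner_sub_right, real_inner_self_eq_norm_sq]
      rw [hXdef, hqdef, hid]
      ring
    · right
      rw [inner_sub_right, real_inner_self_eq_norm_sq, real_inner_comm]
      rw [hXdef, hqdef, hid]
      ring
  have habs : 2*|⟪v, ζ - ζs⟫| ≤ |X| + q := by
    rcases hinner with h | h
    · have := abs_add_le X q
      rw [abs_of_pos hq] at this
      calc 2*|⟪v, ζ - ζs⟫| = |2*⟪v, ζ - ζs⟫| := by rw [abs_mul]; norm_num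
        _ = |X + q| := by rw [h]
        _ ≤ |X| + q := this
    · have h2 : |X - q| ≤ |X| + |q| := abs_sub X q
      rw [abs_of_pos hq] at h2
      calc 2*|⟪v, ζ - ζs⟫| = |2*⟪v, ζ - ζs⟫| := by rw [abs_mul]; norm_num
        _ = |X - q| := by rw [h]
        _ ≤ |X| + q := h2
  have hE1 : q/2 + |X| ≤ q + X^2/q := by
    have h1 : |X| - q/2 ≤ X^2/q := by
      rw [le_div_iff₀ hq]
      nlinarith [sq_nonneg (|X| - q/2), sq_abs X]
    linarith
  have hfin : c/4 * q + c/2 * |⟪v, ζ - ζs⟫| ≤ c * (q + X^2/q) := by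
    have h2 : |⟪v, ζ - ζs⟫| ≤ (|X| + q)/2 := by linarith
    have h3 : q/4 + |⟪v, ζ - ζs⟫|/2 ≤ q + X^2/q := by
      have : q/4 + (|X| + q)/4 ≤ q/2 + |X| := by
        have := abs_nonneg X
        linarith
      linarith
    nlinarith [h3, hc.le]
  linarith

lemma pw1 {A B : ℝ} (hA : 0 ≤ A) (hB : 0 ≤ B) {γ : ℝ} (hγ0 : 0 ≤ γ) (hγ1 : γ < 1) :
    (1 + A) * (1 + A + B) ^ (-(1 - γ)) ≤ (1 + A) ^ γ := by
  have h1 : (1 + A + B) ^ (-(1 - γ)) ≤ (1 + A) ^ (-(1 - γ)) :=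
    rpow_base_anti (by linarith) (by linarith) (by linarith)
  have h2 : (1 + A) * (1 + A) ^ (-(1 - γ)) = (1 + A) ^ γ := by
    have : (1 + A : ℝ) ^ γ = (1 + A) ^ ((1 : ℝ) + -(1 - γ)) := by norm_num
    rw [this, Real.rpow_add (by linarith), Real.rpow_one]
  calc (1 + A) * (1 + A + B) ^ (-(1 - γ))
      ≤ (1 + A) * (1 + A) ^ (-(1 - γ)) := by
        apply mul_le_mul_of_nonneg_left h1 (by linarith)
    _ = (1 + A) ^ γ := h2

lemma pw2 {ζ ζs : E3'} {γ : ℝ} (hγ0 : 0 ≤ γ) (hγ1 : γ < 1) :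
    (1 + ‖ζ‖) ^ γ ≤ (1 + ‖ζs‖) ^ γ * (1 + ‖ζ - ζs‖) := by
  have h0 : ‖ζ‖ ≤ ‖ζs‖ + ‖ζ - ζs‖ := by
    have he : ζs + (ζ - ζs) = ζ := by abel
    calc ‖ζ‖ = ‖ζs + (ζ - ζs)‖ := by rw [he]
      _ ≤ ‖ζs‖ + ‖ζ - ζs‖ := norm_add_le _ _
  have h1 : (1 + ‖ζ‖ : ℝ) ≤ (1 + ‖ζs‖) * (1 + ‖ζ - ζs‖) := by
    nlinarith [norm_nonneg ζs, norm_nonneg (ζ - ζs)]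
  calc (1 + ‖ζ‖ : ℝ) ^ γ ≤ ((1 + ‖ζs‖) * (1 + ‖ζ - ζs‖)) ^ γ :=
        Real.rpow_le_rpow (by positivity) h1 hγ0
    _ = (1 + ‖ζs‖) ^ γ * (1 + ‖ζ - ζs‖) ^ γ :=
        Real.mul_rpow (by positivity) (by positivity)
    _ ≤ (1 + ‖ζs‖) ^ γ * (1 + ‖ζ - ζs‖) := by
        apply mul_le_mul_of_nonneg_left _ (by positivity)
        calc (1 + ‖ζ - ζs‖ : ℝ) ^ γ ≤ (1 + ‖ζ - ζs‖) ^ (1:ℝ) :=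
              Real.rpow_le_rpow_of_exponent_le (by nlinarith [norm_nonneg (ζ - ζs)]) (by linarith)
          _ = 1 + ‖ζ - ζs‖ := Real.rpow_one _

lemma absorb {r c : ℝ} (hr : 0 ≤ r) (hc : 0 < c) :
    (1 + r) * Real.exp (-(c/4 * r^2)) ≤ Real.exp (2/c) * Real.exp (-(c/8 * r^2)) := by
  have h1 : (1 + r : ℝ) ≤ Real.exp r := by
    have := Real.add_one_le_exp r
    linarith
  have h2c : c * (2/c) = 2 := by field_simp
  calc (1 + r) * Real.exp (-(c/4 * r^2))
      ≤ Real.exp r * Real.exp (-(c/4 * r^2)) := by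
        apply mul_le_mul_of_nonneg_right h1 (Real.exp_pos _).le
    _ = Real.exp (r - c/4 * r^2) := by rw [← Real.exp_add]; ring_nf
    _ ≤ Real.exp (2/c - c/8 * r^2) := by
        apply Real.exp_le_exp.2
        nlinarith [sq_nonneg (c*r - 4), mul_pos hc hc, sq_nonneg r, sq_nonneg (c*r)]
    _ = Real.exp (2/c) * Real.exp (-(c/8 * r^2)) := by rw [← Real.exp_add]; ring_nf

lemma grad_pw {γ δ C₂ c : ℝ} {k : E3' → E3' → ℝ} (hγ0 : 0 ≤ γ) (hγ1 : γ < 1)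
    (hcdef : c = (1-δ)/4) (hc0 : 0 < c) (hC₂ : 0 < C₂)
    (hk : KernelGradBound γ δ C₂ k) {ζ ζs : E3'} (hne : ζ ≠ ζs) :
    ‖fderiv ℝ (fun w => k w ζs) ζ‖ ≤
      C₂ * ((1 + ‖ζ‖)^γ * ((‖ζ - ζs‖^2)⁻¹ *
        (Real.exp (-(c/8 * ‖ζ - ζs‖^2)) * Real.exp (-(c/2 * |⟪ζ, ζ - ζs⟫|))))) := by
  have hb := hk.2 ζ ζs hne
  rw [← hcdef] at hb
  have h1 := pw1 (norm_nonneg ζ) (norm_nonneg ζs) hγ0 hγ1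
  have h2 := exponent_est (v := ζ) hne (Or.inl rfl) hc0
  have h3 : Real.exp (-(c/4 * ‖ζ - ζs‖^2)) ≤ Real.exp (-(c/8 * ‖ζ - ζs‖^2)) := by
    apply Real.exp_le_exp.2
    nlinarith [sq_nonneg ‖ζ - ζs‖, hc0.le]
  have hqinv : (0:ℝ) ≤ (‖ζ - ζs‖^2)⁻¹ := by positivity
  calc ‖fderiv ℝ (fun w => k w ζs) ζ‖ ≤ _ := hb
    _ = C₂ * (((1 + ‖ζ‖) * (1 + ‖ζ‖ + ‖ζs‖) ^ (-(1 - γ))) * ((‖ζ - ζs‖ ^ 2)⁻¹ *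
        Real.exp (-c * (‖ζ - ζs‖ ^ 2 + ((‖ζ‖ ^ 2 - ‖ζs‖ ^ 2) / ‖ζ - ζs‖) ^ 2)))) := by
        ring
    _ ≤ C₂ * ((1 + ‖ζ‖)^γ * ((‖ζ - ζs‖ ^ 2)⁻¹ *
        (Real.exp (-(c/8 * ‖ζ - ζs‖^2)) * Real.exp (-(c/2 * |⟪ζ, ζ - ζs⟫|))))) := by
        apply mul_le_mul_of_nonneg_left _ hC₂.le
        apply mul_le_mul h1 _ (by positivity) (by positivity)
        apply mul_le_mul_of_nonneg_left _ hqinv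
        refine h2.trans ?_
        exact mul_le_mul_of_nonneg_right h3 (Real.exp_pos _).le

lemma grad_pw' {γ δ C₂ c : ℝ} {k : E3' → E3' → ℝ} (hγ0 : 0 ≤ γ) (hγ1 : γ < 1)
    (hcdef : c = (1-δ)/4) (hc0 : 0 < c) (hC₂ : 0 < C₂)
    (hk : KernelGradBound γ δ C₂ k) {ζ ζs : E3'} (hne : ζ ≠ ζs) :
    ‖fderiv ℝ (fun w => k w ζs) ζ‖ ≤
      (C₂ * Real.exp (2/c)) * ((1 + ‖ζs‖)^γ * ((‖ζ - ζs‖^2)⁻¹ *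
        (Real.exp (-(c/8 * ‖ζ - ζs‖^2)) * Real.exp (-(c/2 * |⟪ζs, ζ - ζs⟫|))))) := by
  have hb := hk.2 ζ ζs hne
  rw [← hcdef] at hb
  have h1 := pw1 (norm_nonneg ζ) (norm_nonneg ζs) hγ0 hγ1
  have h2 := exponent_est (v := ζs) hne (Or.inr rfl) hc0
  have hpw2 := pw2 (ζ := ζ) (ζs := ζs) hγ0 hγ1
  have habs := absorb (norm_nonneg (ζ - ζs)) hc0
  have hqinv : (0:ℝ) ≤ (‖ζ - ζs‖^2)⁻¹ := by positivity
  calc ‖fderiv ℝ (fun w => k w ζs) ζ‖ ≤ _ := hb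
    _ = C₂ * (((1 + ‖ζ‖) * (1 + ‖ζ‖ + ‖ζs‖) ^ (-(1 - γ))) * ((‖ζ - ζs‖ ^ 2)⁻¹ *
        Real.exp (-c * (‖ζ - ζs‖ ^ 2 + ((‖ζ‖ ^ 2 - ‖ζs‖ ^ 2) / ‖ζ - ζs‖) ^ 2)))) := by
        ring
    _ ≤ C₂ * ((1 + ‖ζ‖)^γ * ((‖ζ - ζs‖ ^ 2)⁻¹ *
        (Real.exp (-(c/4 * ‖ζ - ζs‖^2)) * Real.exp (-(c/2 * |⟪ζs, ζ - ζs⟫|))))) := by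
        apply mul_le_mul_of_nonneg_left _ hC₂.le
        apply mul_le_mul h1 _ (by positivity) (by positivity)
        exact mul_le_mul_of_nonneg_left h2 hqinv
    _ ≤ C₂ * (((1 + ‖ζs‖)^γ * (1 + ‖ζ - ζs‖)) * ((‖ζ - ζs‖ ^ 2)⁻¹ *
        (Real.exp (-(c/4 * ‖ζ - ζs‖^2)) * Real.exp (-(c/2 * |⟪ζs, ζ - ζs⟫|))))) := by
        apply mul_le_mul_of_nonneg_left _ hC₂.le
        apply mul_le_mul_of_nonneg_right hpw2 (by positivity)
    _ = C₂ * ((1 + ‖ζs‖)^γ * ((‖ζ - ζs‖ ^ 2)⁻¹ *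
        (((1 + ‖ζ - ζs‖) * Real.exp (-(c/4 * ‖ζ - ζs‖^2))) *
          Real.exp (-(c/2 * |⟪ζs, ζ - ζs⟫|))))) := by ring
    _ ≤ C₂ * ((1 + ‖ζs‖)^γ * ((‖ζ - ζs‖ ^ 2)⁻¹ *
        ((Real.exp (2/c) * Real.exp (-(c/8 * ‖ζ - ζs‖^2))) *
          Real.exp (-(c/2 * |⟪ζs, ζ - ζs⟫|))))) := by
        apply mul_le_mul_of_nonneg_left _ hC₂.le
        apply mul_le_mul_of_nonneg_left _ (by positivity)
        apply mul_le_mul_of_nonneg_left _ hqinv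
        exact mul_le_mul_of_nonneg_right habs (Real.exp_pos _).le
    _ = (C₂ * Real.exp (2/c)) * ((1 + ‖ζs‖)^γ * ((‖ζ - ζs‖^2)⁻¹ *
        (Real.exp (-(c/8 * ‖ζ - ζs‖^2)) * Real.exp (-(c/2 * |⟪ζs, ζ - ζs⟫|))))) := by
        ring


/-- Both mixed `L^∞L¹` norms of `∇_ζ k` are finite, with a bound depending only
on `γ`, `δ`, `C₂`. -/
theorem stmt_3 (γ δ C₂ : ℝ) (hγ₀ : 0 ≤ γ) (hγ₁ : γ < 1)
    (hδ₀ : 0 < δ) (hδ₁ : δ < 1) (hC₂ : 0 < C₂) :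
    ∃ C : ℝ, 0 < C ∧ ∀ k : E3 → E3 → ℝ, KernelGradBound γ δ C₂ k →
      (∀ ζ : E3,
        (∫⁻ ζs : E3, ENNReal.ofReal ‖fderiv ℝ (fun w => k w ζs) ζ‖) ≤
          ENNReal.ofReal C) ∧
      (∀ ζs : E3,
        (∫⁻ ζ : E3, ENNReal.ofReal ‖fderiv ℝ (fun w => k w ζs) ζ‖) ≤
          ENNReal.ofReal C) := by
  set c : ℝ := (1 - δ)/4 with hcdef
  have hc0 : 0 < c := by rw [hcdef]; linarith
  obtain ⟨CK, hCK, hkey⟩ := key_lemma (c₀ := c/8) (c₂ := c/2) hγ₀ hγ₁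
    (by positivity) (by positivity)
  refine ⟨(C₂ + C₂ * Real.exp (2/c)) * CK, by positivity, fun k hk => ⟨?_, ?_⟩⟩
  · -- first mixed norm: fix ζ, integrate over ζs
    intro ζ
    have hae : ∀ᵐ ζs : E3, ζs ≠ ζ := by
      refine ae_iff.2 ?_
      simp only [ne_eq, not_not, Set.setOf_eq_eq_singleton]
      exact measure_singleton ζ
    have hG : Measurable (fun u : E3 => ENNReal.ofReal ((1 + ‖ζ‖)^γ * ((‖u‖^2)⁻¹ *
        (Real.exp (-(c/8 * ‖u‖^2)) * Real.exp (-(c/2 * |⟪ζ, u⟫|)))))) := by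
      apply ENNReal.measurable_ofReal.comp
      have m1 : Measurable fun u : E3 => (‖u‖^2)⁻¹ :=
        ((continuous_norm.pow 2).measurable).inv
      have m2 : Measurable fun u : E3 => Real.exp (-(c/8 * ‖u‖^2)) :=
        (Real.continuous_exp.comp ((continuous_const.mul (continuous_norm.pow 2)).neg)).measurable
      have m3 : Measurable fun u : E3 => Real.exp (-(c/2 * |⟪ζ, u⟫|)) :=
        (Real.continuous_exp.comp ((continuous_const.mul
          (continuous_const.inner continuous_id).abs).neg)).measurable
      exact (m1.mul (m2.mul m3)).const_mul _
    calc ∫⁻ ζs : E3, ENNReal.ofReal ‖fderiv ℝ (fun w => k w ζs) ζ‖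
        ≤ ∫⁻ ζs : E3, ENNReal.ofReal (C₂ * ((1 + ‖ζ‖)^γ * ((‖ζ - ζs‖^2)⁻¹ *
            (Real.exp (-(c/8 * ‖ζ - ζs‖^2)) *
              Real.exp (-(c/2 * |⟪ζ, ζ - ζs⟫|)))))) := by
          apply lintegral_mono_ae
          filter_upwards [hae] with ζs hζs
          exact ENNReal.ofReal_le_ofReal
            (grad_pw hγ₀ hγ₁ hcdef hc0 hC₂ hk (fun h => hζs h.symm))
      _ = ENNReal.ofReal C₂ * ∫⁻ ζs : E3, ENNReal.ofReal ((1 + ‖ζ‖)^γ *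
            ((‖ζ - ζs‖^2)⁻¹ * (Real.exp (-(c/8 * ‖ζ - ζs‖^2)) *
              Real.exp (-(c/2 * |⟪ζ, ζ - ζs⟫|))))) := by
          rw [← lintegral_const_mul' _ _ ENNReal.ofReal_ne_top]
          apply lintegral_congr
          intro ζs
          rw [← ENNReal.ofReal_mul hC₂.le]
      _ = ENNReal.ofReal C₂ * ∫⁻ u : E3, ENNReal.ofReal ((1 + ‖ζ‖)^γ *
            ((‖u‖^2)⁻¹ * (Real.exp (-(c/8 * ‖u‖^2)) *
              Real.exp (-(c/2 * |⟪ζ, u⟫|))))) := by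
          congr 1
          exact (Measure.measurePreserving_sub_left volume ζ).lintegral_comp hG
      _ ≤ ENNReal.ofReal C₂ * ENNReal.ofReal CK := by
          exact mul_le_mul_right (hkey ζ) _
      _ ≤ ENNReal.ofReal ((C₂ + C₂ * Real.exp (2/c)) * CK) := by
          rw [← ENNReal.ofReal_mul hC₂.le]
          apply ENNReal.ofReal_le_ofReal
          nlinarith [Real.exp_pos (2/c), hCK.le, hC₂.le, mul_nonneg (mul_nonneg hC₂.le (Real.exp_pos (2/c)).le) hCK.le]
  · -- second mixed norm: fix ζs, integrate over ζ
    intro ζs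
    have hae : ∀ᵐ ζ : E3, ζ ≠ ζs := by
      refine ae_iff.2 ?_
      simp only [ne_eq, not_not, Set.setOf_eq_eq_singleton]
      exact measure_singleton ζs
    have hG : Measurable (fun u : E3 => ENNReal.ofReal ((1 + ‖ζs‖)^γ * ((‖u‖^2)⁻¹ *
        (Real.exp (-(c/8 * ‖u‖^2)) * Real.exp (-(c/2 * |⟪ζs, u⟫|)))))) := by
      apply ENNReal.measurable_ofReal.comp
      have m1 : Measurable fun u : E3 => (‖u‖^2)⁻¹ :=
        ((continuous_norm.pow 2).measurable).inv
      have m2 : Measurable fun u : E3 => Real.exp (-(c/8 * ‖u‖^2)) :=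
        (Real.continuous_exp.comp ((continuous_const.mul (continuous_norm.pow 2)).neg)).measurable
      have m3 : Measurable fun u : E3 => Real.exp (-(c/2 * |⟪ζs, u⟫|)) :=
        (Real.continuous_exp.comp ((continuous_const.mul
          (continuous_const.inner continuous_id).abs).neg)).measurable
      exact (m1.mul (m2.mul m3)).const_mul _
    calc ∫⁻ ζ : E3, ENNReal.ofReal ‖fderiv ℝ (fun w => k w ζs) ζ‖
        ≤ ∫⁻ ζ : E3, ENNReal.ofReal ((C₂ * Real.exp (2/c)) * ((1 + ‖ζs‖)^γ *
            ((‖ζ - ζs‖^2)⁻¹ * (Real.exp (-(c/8 * ‖ζ - ζs‖^2)) *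
              Real.exp (-(c/2 * |⟪ζs, ζ - ζs⟫|)))))) := by
          apply lintegral_mono_ae
          filter_upwards [hae] with ζ hζ
          exact ENNReal.ofReal_le_ofReal (grad_pw' hγ₀ hγ₁ hcdef hc0 hC₂ hk hζ)
      _ = ENNReal.ofReal (C₂ * Real.exp (2/c)) * ∫⁻ ζ : E3, ENNReal.ofReal ((1 + ‖ζs‖)^γ *
            ((‖ζ - ζs‖^2)⁻¹ * (Real.exp (-(c/8 * ‖ζ - ζs‖^2)) *
              Real.exp (-(c/2 * |⟪ζs, ζ - ζs⟫|))))) := by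
          rw [← lintegral_const_mul' _ _ ENNReal.ofReal_ne_top]
          apply lintegral_congr
          intro ζ
          rw [← ENNReal.ofReal_mul (by positivity)]
      _ = ENNReal.ofReal (C₂ * Real.exp (2/c)) * ∫⁻ u : E3, ENNReal.ofReal ((1 + ‖ζs‖)^γ *
            ((‖u‖^2)⁻¹ * (Real.exp (-(c/8 * ‖u‖^2)) *
              Real.exp (-(c/2 * |⟪ζs, u⟫|))))) := by
          congr 1
          exact (measurePreserving_sub_right volume ζs).lintegral_comp hG
      _ ≤ ENNReal.ofReal (C₂ * Real.exp (2/c)) * ENNReal.ofReal CK := by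
          exact mul_le_mul_right (hkey ζs) _
      _ ≤ ENNReal.ofReal ((C₂ + C₂ * Real.exp (2/c)) * CK) := by
          rw [← ENNReal.ofReal_mul (by positivity)]
          apply ENNReal.ofReal_le_ofReal
          nlinarith [Real.exp_pos (2/c), hCK.le, hC₂.le, mul_nonneg (mul_nonneg hC₂.le (Real.exp_pos (2/c)).le) hCK.le]
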